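/- Let G be a finitely generated metabelian group. Then G satisfies the maximal condition on normal subgroups (max-n): every nonempty set of normal subgroups of G has a maximal element; equivalently, every ascending chain of normal subgroups of G stabilizes. -/

import Mathlib

open Subgroup
open scoped IsMulCommutative commutatorElement

section Hall

variable {G : Type*} [Group G] (A : Subgroup G) [A.Normal] [IsMulCommutative A]

/-- Conjugation action of `G ⧸ A` on the abelian normal subgroup `A`, as a
representation over `ℤ`. -/
noncomputable def hallRho : Representation ℤ (G ⧸ A) (Additive ↥A) :=
  (({ toFun := fun f => (MonoidHom.toAdditive f.toMonoidHom).toIntLinearMap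
      map_one' := by ext x; rfl
      map_mul' := fun f g => by ext x; rfl } :
      MulAut ↥A →* (Additive ↥A →ₗ[ℤ] Additive ↥A))).comp
    (QuotientGroup.lift A MulAut.conjNormal (by
      intro a ha
      ext x
      simp only [MulAut.one_apply]
      rw [MulAut.conjNormal_apply]
      rw [mul_comm_of_mem_isMulCommutative A ha x.2]; group))

lemma hallRho_apply (g : G) (x : Additive ↥A) :
    hallRho A (QuotientGroup.mk g) x = Additive.ofMul (MulAut.conjNormal g x.toMul) := rfl

/-- The element of the module `(hallRho A).asModule` attached to `a : A`. -/
noncomputable def hallEl (a : ↥A) : (hallRho A).asModule :=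
  (hallRho A).asModuleEquiv.symm (Additive.ofMul a)

lemma hallEl_mul (a b : ↥A) : hallEl A (a * b) = hallEl A a + hallEl A b := by
  simp [hallEl, ofMul_mul]

lemma hallEl_conj (g : G) (a : ↥A) :
    hallEl A (MulAut.conjNormal g a) =
      MonoidAlgebra.of ℤ (G ⧸ A) (QuotientGroup.mk g) • hallEl A a := by
  have h := (hallRho A).asModuleEquiv_symm_map_rho (QuotientGroup.mk g) (Additive.ofMul a)
  rw [hallRho_apply] at h
  simpa [hallEl] using h

/-- The submodule of `(hallRho A).asModule` corresponding to a normal subgroup of `G`. -/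
noncomputable def hallSub (N : Subgroup G) (hN : N.Normal) :
    Submodule (MonoidAlgebra ℤ (G ⧸ A)) (hallRho A).asModule where
  carrier := {x | (((hallRho A).asModuleEquiv x).toMul : G) ∈ N}
  add_mem' := by
    intro x y hx hy
    simp only [Set.mem_setOf_eq, map_add, toMul_add, Subgroup.coe_mul] at *
    exact N.mul_mem hx hy
  zero_mem' := by
    simp only [Set.mem_setOf_eq, map_zero]
    exact N.one_mem
  smul_mem' := by
    have key : ∀ c : MonoidAlgebra ℤ (G ⧸ A), ∀ v : Additive ↥A,
        ((v.toMul : ↥A) : G) ∈ N →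
        ((((hallRho A).asAlgebraHom c v).toMul : ↥A) : G) ∈ N := by
      intro c
      induction c using MonoidAlgebra.induction_on with
      | of q =>
        induction q using QuotientGroup.induction_on with
        | H g =>
          intro v hv
          rw [Representation.asAlgebraHom_of, hallRho_apply]
          simpa using hN.conj_mem _ hv g
      | add f g hf hg =>
        intro v hv
        rw [map_add, LinearMap.add_apply, toMul_add, Subgroup.coe_mul]
        exact N.mul_mem (hf v hv) (hg v hv)
      | smul r f hf =>
        intro v hv
        rw [map_smul, LinearMap.smul_apply, toMul_zsmul, SubgroupClass.coe_zpow]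
        exact N.zpow_mem (hf v hv) r
    intro c x hx
    have := key c ((hallRho A).asModuleEquiv x) hx
    simpa [Set.mem_setOf_eq] using key c ((hallRho A).asModuleEquiv x) hx

lemma mem_hallSub {N : Subgroup G} {hN : N.Normal} (a : ↥A) :
    hallEl A a ∈ hallSub A N hN ↔ (a : G) ∈ N := by
  simp [hallSub, hallEl, Submodule.mem_mk]

lemma hallSub_mono {N₁ N₂ : Subgroup G} (h₁ : N₁.Normal) (h₂ : N₂.Normal) (h : N₁ ≤ N₂) :
    hallSub A N₁ h₁ ≤ hallSub A N₂ h₂ := fun _ hx => h hx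

/-- The subgroup of `G` attached to a submodule of `(hallRho A).asModule`. -/
noncomputable def hallSubgroupOf (P : Submodule (MonoidAlgebra ℤ (G ⧸ A)) (hallRho A).asModule) :
    Subgroup G where
  carrier := {g | ∃ hg : g ∈ A, hallEl A ⟨g, hg⟩ ∈ P}
  one_mem' := ⟨A.one_mem, by
    have h1 : (⟨(1 : G), A.one_mem⟩ : ↥A) = 1 := rfl
    rw [h1]
    simpa [hallEl] using P.zero_mem⟩
  mul_mem' := by
    rintro a b ⟨ha, hpa⟩ ⟨hb, hpb⟩
    refine ⟨A.mul_mem ha hb, ?_⟩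
    have h1 : (⟨a * b, A.mul_mem ha hb⟩ : ↥A) = ⟨a, ha⟩ * ⟨b, hb⟩ := rfl
    rw [h1, hallEl_mul]
    exact P.add_mem hpa hpb
  inv_mem' := by
    rintro a ⟨ha, hpa⟩
    refine ⟨A.inv_mem ha, ?_⟩
    have h1 : (⟨a⁻¹, A.inv_mem ha⟩ : ↥A) = (⟨a, ha⟩ : ↥A)⁻¹ := rfl
    have h2 : hallEl A (⟨a, ha⟩ : ↥A)⁻¹ = - hallEl A ⟨a, ha⟩ := by
      simp [hallEl, ofMul_inv]
    rw [h1, h2]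
    exact P.neg_mem hpa

lemma hallSubgroupOf_normal (P : Submodule (MonoidAlgebra ℤ (G ⧸ A)) (hallRho A).asModule) :
    (hallSubgroupOf A P).Normal := by
  constructor
  rintro n ⟨hn, hp⟩ g
  refine ⟨(by exact ‹A.Normal›.conj_mem n hn g : g * n * g⁻¹ ∈ A), ?_⟩
  have h1 : (⟨g * n * g⁻¹, ‹A.Normal›.conj_mem n hn g⟩ : ↥A) =
      MulAut.conjNormal g (⟨n, hn⟩ : ↥A) := by
    ext; simp [MulAut.conjNormal_apply]
  rw [h1, hallEl_conj]
  exact P.smul_mem _ hp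

/-- If `A` lies in the normal closure of the commutators of a generating set `T`, then the
module `(hallRho A).asModule` is generated by those commutators, hence finitely generated. -/
lemma hallModuleFinite (T : Set G) (hTfin : T.Finite)
    (hT : A ≤ Subgroup.normalClosure {g | ∃ a ∈ T, ∃ b ∈ T, ⁅a, b⁆ = g})
    (hTA : ∀ a ∈ T, ∀ b ∈ T, ⁅a, b⁆ ∈ A) :
    Module.Finite (MonoidAlgebra ℤ (G ⧸ A)) (hallRho A).asModule := by
  classical
  set f : G × G → (hallRho A).asModule := fun p =>
    if h : ⁅p.1, p.2⁆ ∈ A then hallEl A ⟨⁅p.1, p.2⁆, h⟩ else 0 with hf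
  set s : Set (hallRho A).asModule := f '' (T ×ˢ T) with hs
  have hsfin : s.Finite := (hTfin.prod hTfin).image f
  set P := Submodule.span (MonoidAlgebra ℤ (G ⧸ A)) s with hP
  haveI : (hallSubgroupOf A P).Normal := hallSubgroupOf_normal A P
  have h1 : {g | ∃ a ∈ T, ∃ b ∈ T, ⁅a, b⁆ = g} ⊆ (hallSubgroupOf A P : Set G) := by
    rintro g ⟨a, ha, b, hb, rfl⟩
    refine ⟨hTA a ha b hb, ?_⟩
    have : hallEl A ⟨⁅a, b⁆, hTA a ha b hb⟩ = f (a, b) := by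
      rw [hf]; simp [hTA a ha b hb]
    rw [this]
    exact Submodule.subset_span ⟨(a, b), Set.mk_mem_prod ha hb, rfl⟩
  have h2 : Subgroup.normalClosure {g | ∃ a ∈ T, ∃ b ∈ T, ⁅a, b⁆ = g} ≤ hallSubgroupOf A P :=
    Subgroup.normalClosure_le_normal h1
  have hPtop : P = ⊤ := by
    rw [Submodule.eq_top_iff']
    intro x
    set a : ↥A := ((hallRho A).asModuleEquiv x).toMul with hax
    obtain ⟨hg, hp⟩ := h2 (hT a.2)
    have h3 : (⟨(a : G), hg⟩ : ↥A) = a := rfl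
    have h4 : hallEl A a = x := by simp [hallEl, hax]
    rwa [h3, h4] at hp
  refine ⟨?_⟩
  rw [Submodule.fg_def]
  exact ⟨s, hsfin, hPtop⟩

/-- The key exchange lemma: two nested normal subgroups with the same image mod `A` and the
same associated submodule are equal. -/
lemma hallEq {N₁ N₂ : Subgroup G} (h₁ : N₁.Normal) (h₂ : N₂.Normal) (hle : N₁ ≤ N₂)
    (hq : Subgroup.map (QuotientGroup.mk' A) N₁ = Subgroup.map (QuotientGroup.mk' A) N₂)
    (hm : hallSub A N₁ h₁ = hallSub A N₂ h₂) : N₂ = N₁ := by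
  refine le_antisymm (fun x hx => ?_) hle
  have hsup : N₁ ⊔ A = N₂ ⊔ A := by
    have e₁ := Subgroup.comap_map_eq (QuotientGroup.mk' A) N₁
    have e₂ := Subgroup.comap_map_eq (QuotientGroup.mk' A) N₂
    rw [QuotientGroup.ker_mk'] at e₁ e₂
    rw [← e₁, ← e₂, hq]
  have hx' : x ∈ (↑(N₁ ⊔ A) : Set G) := by
    rw [hsup]; exact le_sup_left (α := Subgroup G) hx
  rw [Subgroup.mul_normal N₁ A] at hx'
  obtain ⟨n, hn, a, ha, rfl⟩ := hx'
  have han : a ∈ N₂ := by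
    have : a = n⁻¹ * (n * a) := by group
    rw [this]
    exact N₂.mul_mem (N₂.inv_mem (hle hn)) hx
  have : hallEl A ⟨a, ha⟩ ∈ hallSub A N₂ h₂ := (mem_hallSub A _).mpr han
  rw [← hm, mem_hallSub] at this
  exact N₁.mul_mem hn this

end Hall

/-- The commutator subgroup is contained in the normal closure of the commutators of any
generating set. -/
lemma commutator_le_normalClosure_commutators {G : Type*} [Group G] (T : Set G)
    (hT : Subgroup.closure T = ⊤) :
    commutator G ≤ Subgroup.normalClosure {g | ∃ a ∈ T, ∃ b ∈ T, ⁅a, b⁆ = g} := by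
  set K := Subgroup.normalClosure {g | ∃ a ∈ T, ∃ b ∈ T, ⁅a, b⁆ = g} with hK
  haveI : K.Normal := Subgroup.normalClosure_normal
  have hgen : Subgroup.closure ((QuotientGroup.mk' K) '' T) = ⊤ := by
    rw [← MonoidHom.map_closure (QuotientGroup.mk' K) T, hT]
    exact Subgroup.map_top_of_surjective _ (QuotientGroup.mk'_surjective K)
  have hTcomm : ∀ x ∈ (QuotientGroup.mk' K) '' T,
      ∀ y ∈ (QuotientGroup.mk' K) '' T, Commute x y := by
    rintro _ ⟨a, ha, rfl⟩ _ ⟨b, hb, rfl⟩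
    rw [← commutatorElement_eq_one_iff_commute]
    have : (⁅a, b⁆ : G) ∈ K := Subgroup.subset_normalClosure ⟨a, ha, b, hb, rfl⟩
    have h1 : ((⁅a, b⁆ : G) : G ⧸ K) = 1 := (QuotientGroup.eq_one_iff _).mpr this
    simpa [commutatorElement_def] using h1
  have hcomm : ∀ x y : G ⧸ K, Commute x y := by
    intro x y
    have hx : x ∈ Subgroup.closure ((QuotientGroup.mk' K) '' T) := by
      rw [hgen]; trivial
    have hy : y ∈ Subgroup.closure ((QuotientGroup.mk' K) '' T) := by
      rw [hgen]; trivial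
    induction hx, hy using Subgroup.closure_induction₂ with
    | mem x y hx hy => exact hTcomm x hx y hy
    | one_left x hx => exact Commute.one_left x
    | one_right x hx => exact Commute.one_right x
    | mul_left x y z _ _ _ h₁ h₂ => exact h₁.mul_left h₂
    | mul_right y z x _ _ _ h₁ h₂ => exact h₁.mul_right h₂
    | inv_left x y _ _ h => exact h.inv_left
    | inv_right x y _ _ h => exact h.inv_right
  rw [_root_.commutator_def, Subgroup.commutator_le]
  intro g _ h _
  rw [← QuotientGroup.eq_one_iff (⁅g, h⁆ : G)]
  have := (hcomm (QuotientGroup.mk g) (QuotientGroup.mk h))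
  rw [← commutatorElement_eq_one_iff_commute] at this
  simpa [commutatorElement_def] using this

lemma exists_max_of_strictMono {α β : Type*} [Preorder α] [Preorder β] {f : α → β}
    (hf : StrictMono f) (hwf : WellFounded ((· > ·) : β → β → Prop)) (T : Set α)
    (hT : T.Nonempty) : ∃ m ∈ T, ∀ x ∈ T, ¬ m < x := by
  obtain ⟨b, ⟨m, hmT, rfl⟩, hb⟩ := hwf.has_min (f '' T) (hT.image f)
  exact ⟨m, hmT, fun x hx hlt => hb (f x) ⟨x, hx, rfl⟩ (hf hlt)⟩

/-- A finitely generated metabelian group satisfies the maximal condition on normal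
subgroups: every nonempty family of normal subgroups has a maximal element. -/
theorem stmt11 {G : Type*} [Group G] (hfg : Group.FG G)
    (hmeta : IsMulCommutative (commutator G))
    (S : Set (Subgroup G)) (hS : ∀ N ∈ S, N.Normal) (hne : S.Nonempty) :
    ∃ M ∈ S, ∀ N ∈ S, M ≤ N → N = M := by
  classical
  haveI := hfg
  haveI := hmeta
  set A : Subgroup G := commutator G with hA
  -- the quotient is a finitely generated commutative group
  letI : CommGroup (G ⧸ A) :=
    { (inferInstance : Group (G ⧸ A)) with
      mul_comm := fun a b => by
        induction a using QuotientGroup.induction_on with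
        | H x =>
        induction b using QuotientGroup.induction_on with
        | H y =>
          show QuotientGroup.mk (x * y) = QuotientGroup.mk (y * x)
          rw [QuotientGroup.eq]
          have : (x * y)⁻¹ * (y * x) = ⁅y⁻¹, x⁻¹⁆ := by
            simp [commutatorElement_def]; group
          rw [this]
          exact Subgroup.commutator_mem_commutator (Subgroup.mem_top _) (Subgroup.mem_top _) }
  haveI : Group.FG (G ⧸ A) := Group.fg_of_surjective (QuotientGroup.mk'_surjective A)
  haveI : Monoid.FG (G ⧸ A) := Group.fg_iff_monoid_fg.mp inferInstance
  haveI : IsNoetherianRing (MonoidAlgebra ℤ (G ⧸ A)) :=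
    Algebra.FiniteType.isNoetherianRing ℤ (MonoidAlgebra ℤ (G ⧸ A))
  -- the module (hallRho A).asModule is finitely generated, hence Noetherian
  obtain ⟨Tf, hTf⟩ := hfg.1
  haveI : Module.Finite (MonoidAlgebra ℤ (G ⧸ A)) (hallRho A).asModule := by
    refine hallModuleFinite A (Tf : Set G) (Tf.finite_toSet) ?_ ?_
    · rw [hA]; exact commutator_le_normalClosure_commutators _ hTf
    · intro a _ b _
      rw [hA]
      exact Subgroup.commutator_mem_commutator (Subgroup.mem_top _) (Subgroup.mem_top _)
  haveI : IsNoetherian (MonoidAlgebra ℤ (G ⧸ A)) (hallRho A).asModule :=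
    isNoetherian_of_isNoetherianRing_of_finite _ _
  have wfM : WellFounded
      ((· > ·) : Submodule (MonoidAlgebra ℤ (G ⧸ A)) (hallRho A).asModule → _ → Prop) :=
    (inferInstance : WellFoundedGT (Submodule (MonoidAlgebra ℤ (G ⧸ A)) (hallRho A).asModule)).wf
  -- the subgroup lattice of the quotient is Noetherian
  haveI : Module.Finite ℤ (Additive (G ⧸ A)) :=
    Module.Finite.iff_addGroup_fg.mpr inferInstance
  haveI : IsNoetherian ℤ (Additive (G ⧸ A)) := isNoetherian_of_isNoetherianRing_of_finite _ _
  have wfQ : WellFounded ((· > ·) : Submodule ℤ (Additive (G ⧸ A)) → _ → Prop) :=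
    (inferInstance : WellFoundedGT (Submodule ℤ (Additive (G ⧸ A)))).wf
  set fQ : Subgroup (G ⧸ A) → Submodule ℤ (Additive (G ⧸ A)) :=
    fun H => AddSubgroup.toIntSubmodule (Subgroup.toAddSubgroup H) with hfQ
  have hfQmono : StrictMono fQ :=
    fun H K h => by
      exact AddSubgroup.toIntSubmodule.strictMono (Subgroup.toAddSubgroup.strictMono h)
  -- stage 1: maximize the image in the quotient
  set π : Subgroup G → Subgroup (G ⧸ A) := fun N => Subgroup.map (QuotientGroup.mk' A) N with hπ
  obtain ⟨m₁, ⟨M₁, hM₁S, rfl⟩, hm₁max⟩ :=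
    exists_max_of_strictMono hfQmono wfQ (π '' S) (hne.image π)
  -- stage 2: among those with maximal image, maximize the associated submodule
  set S₁ : Set (Subgroup G) := {N | N ∈ S ∧ π N = π M₁} with hS₁
  set gg : Subgroup G → Submodule (MonoidAlgebra ℤ (G ⧸ A)) (hallRho A).asModule :=
    fun N => if h : N.Normal then hallSub A N h else ⊥ with hgg
  have hS₁ne : S₁.Nonempty := ⟨M₁, hM₁S, rfl⟩
  obtain ⟨m₂, ⟨M, ⟨hMS, hMπ⟩, rfl⟩, hm₂max⟩ := wfM.has_min (gg '' S₁) (hS₁ne.image gg)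
  refine ⟨M, hMS, fun N hNS hMN => ?_⟩
  have hMnormal := hS M hMS
  have hNnormal := hS N hNS
  -- the image of N equals the image of M
  have hπN : π N = π M₁ := by
    have h1 : π M₁ ≤ π N := by rw [← hMπ]; exact Subgroup.map_mono hMN
    rcases eq_or_lt_of_le h1 with h | h
    · exact h.symm
    · exact absurd h (hm₁max (π N) ⟨N, hNS, rfl⟩)
  have hN₁ : N ∈ S₁ := ⟨hNS, hπN⟩
  -- the submodule of N equals that of M
  have hggM : gg M = hallSub A M hMnormal := by rw [hgg]; simp [hMnormal]
  have hggN : gg N = hallSub A N hNnormal := by rw [hgg]; simp [hNnormal]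
  have hggEq : gg N = gg M := by
    have h1 : gg M ≤ gg N := by
      rw [hggM, hggN]; exact hallSub_mono A hMnormal hNnormal hMN
    rcases eq_or_lt_of_le h1 with h | h
    · exact h.symm
    · exact absurd h (hm₂max (gg N) ⟨N, hN₁, rfl⟩)
  refine hallEq A hMnormal hNnormal hMN ?_ ?_
  · show π M = π N
    rw [hπN, hMπ]
  · rw [← hggM, ← hggN, hggEq]
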